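/- (Theorem 1) In the setup below, assume f is weakly homogeneous of degree d ∈ (0,1] and tolerance η ≥ 1 over [0,1], i.e. (1/η)·θ·f(x) ≤ f(θ·x) ≤ θ^d·f(x) for all x ∈ ℝ₊ⁿ and θ ∈ [0,1]. Then for every S ⊆ {1,…,n} with |S| ≤ k: u(S) ≥ (1/2)·(1−ε)^{k−1}·(1−Δ/ε)·v(S) and u(S) ≤ 2η·(1 + a^d·k/(ε−Δ)) / ((1−ε)^k·(1−Δ/ε)) · v(S). -/

import Mathlib

open MeasureTheory ProbabilityTheory

/-- For a subset `S` of coordinates, `mask S x` is the vector agreeing with `x` on `S`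
and equal to `0` outside `S`. -/
def mask {n : ℕ} (S : Finset (Fin n)) (x : Fin n → ℝ) : Fin n → ℝ :=
  fun i => if i ∈ S then x i else 0

lemma sum_exclusive_le {α : Type*} (S : Finset α) (P : α → Prop) [DecidablePred P] (r : α → ℝ) (M : ℝ)
    (hM : 0 ≤ M) (hr : ∀ i ∈ S, P i → r i ≤ M)
    (hexcl : ∀ i ∈ S, ∀ j ∈ S, P i → P j → i = j) :
    (∑ i ∈ S, if P i then r i else 0) ≤ M := by
  by_cases h : ∃ i ∈ S, P i
  · obtain ⟨i0, hi0S, hi0⟩ := h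
    rw [Finset.sum_eq_single_of_mem i0 hi0S]
    · rw [if_pos hi0]; exact hr _ hi0S hi0
    · intro j hj hne
      rw [if_neg]
      exact fun hPj => hne (hexcl j hj i0 hi0S hPj hi0)
  · push_neg at h
    rw [Finset.sum_eq_zero]
    · exact hM
    · intro i hi; rw [if_neg (h i hi)]

lemma mask_le_sum_single {n : ℕ} (f : (Fin n → ℝ) → ℝ)
    (hf0 : f 0 = 0)
    (hf_subadd : ∀ x y : Fin n → ℝ, 0 ≤ x → 0 ≤ y → f (x + y) ≤ f x + f y)
    (w : Fin n → ℝ) (hw : 0 ≤ w) (T : Finset (Fin n)) :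
    f (mask T w) ≤ ∑ i ∈ T, f (Pi.single i (w i)) := by
  classical
  induction T using Finset.induction_on with
  | empty =>
      have : mask (∅ : Finset (Fin n)) w = 0 := by funext j; simp [mask]
      simp [this, hf0]
  | @insert i T hiT ih =>
      have hsplit : mask (insert i T) w = Pi.single i (w i) + mask T w := by
        funext j
        by_cases hj : j = i
        · subst hj
          simp [mask, hiT, Pi.single_apply]
        · simp [mask, Finset.mem_insert, hj, Pi.single_apply]
      have hs : (0 : Fin n → ℝ) ≤ Pi.single i (w i) := by
        intro j
        rw [Pi.single_apply]
        split <;> [exact hw i; exact le_rfl]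
      have hm : (0 : Fin n → ℝ) ≤ mask T w := by
        intro j
        simp only [mask]
        split <;> [exact hw j; exact le_rfl]
      calc f (mask (insert i T) w) = f (Pi.single i (w i) + mask T w) := by rw [hsplit]
        _ ≤ f (Pi.single i (w i)) + f (mask T w) := hf_subadd _ _ hs hm
        _ ≤ f (Pi.single i (w i)) + ∑ j ∈ T, f (Pi.single j (w j)) := by linarith [ih]
        _ = ∑ j ∈ insert i T, f (Pi.single j (w j)) := by rw [Finset.sum_insert hiT]

set_option maxHeartbeats 1000000 in
open scoped Classical in
lemma indep_integral_mul {Ωs : Type*} [MeasurableSpace Ωs] (μ : Measure Ωs)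
    [IsProbabilityMeasure μ] {n : ℕ} (X : Fin n → Ωs → ℝ)
    (hX_meas : ∀ i, Measurable (X i))
    (hX_indep : iIndepFun X μ)
    (τ : Fin n → ℝ) (i : Fin n) (T : Finset (Fin n)) (hiT : i ∉ T)
    (g : ℝ → ℝ) (hg : Measurable g) (hg0 : ∀ t, 0 ≤ g t) :
    ∫ ω, g (X i ω) * ({ω' | ∀ j ∈ T, X j ω' ≤ τ j}.indicator (fun _ => (1:ℝ)) ω) ∂μ
      = (∫ ω, g (X i ω) ∂μ) * ∏ j ∈ T, (μ {ω | X j ω ≤ τ j}).toReal := by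
  have hdisj : Disjoint ({i} : Finset (Fin n)) T := Finset.disjoint_singleton_left.mpr hiT
  have base := hX_indep.indepFun_finset {i} T hdisj hX_meas
  set B : Set Ωs := {ω' | ∀ j ∈ T, X j ω' ≤ τ j} with hB
  have hBset : MeasurableSet B := by
    have : B = ⋂ j ∈ T, {ω' | X j ω' ≤ τ j} := by ext ω; simp [hB]
    rw [this]
    exact MeasurableSet.biInter (Set.to_countable _)
      (fun j _ => measurableSet_le (hX_meas j) measurable_const)
  set φ1 : ({x // x ∈ ({i} : Finset (Fin n))} → ℝ) → ℝ :=
    fun y => g (y ⟨i, Finset.mem_singleton_self i⟩) with hφ1def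
  set φ2 : ({x // x ∈ T} → ℝ) → ℝ :=
    fun y => if ∀ j : {x // x ∈ T}, y j ≤ τ j then 1 else 0 with hφ2def
  have hφ1 : Measurable φ1 := hg.comp (measurable_pi_apply _)
  have hφ2 : Measurable φ2 := by
    have hset : MeasurableSet {y : {x // x ∈ T} → ℝ | ∀ j : {x // x ∈ T}, y j ≤ τ (j : Fin n)} := by
      have h : {y : {x // x ∈ T} → ℝ | ∀ j : {x // x ∈ T}, y j ≤ τ (j : Fin n)}
          = ⋂ j : {x // x ∈ T}, {y : {x // x ∈ T} → ℝ | y j ≤ τ (j : Fin n)} := by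
        ext y; simp [Set.mem_iInter]
      rw [h]
      exact MeasurableSet.iInter fun j => measurableSet_le (measurable_pi_apply j) measurable_const
    exact Measurable.ite hset measurable_const measurable_const
  have hind : IndepFun (fun ω => g (X i ω)) (fun ω => φ2 (fun j => X (↑j) ω)) μ :=
    base.comp hφ1 hφ2
  have heq2 : ∀ ω, φ2 (fun j : {x // x ∈ T} => X (↑j) ω) = B.indicator (fun _ => (1:ℝ)) ω := by
    intro ω
    rw [Set.indicator_apply]
    simp only [hφ2def, hB, Set.mem_setOf_eq, Subtype.forall]
  have hm2 : Measurable fun ω => φ2 (fun j : {x // x ∈ T} => X (↑j) ω) :=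
    hφ2.comp (measurable_pi_lambda _ fun j => hX_meas (↑j))
  have hpos2 : 0 ≤ fun ω => φ2 (fun j : {x // x ∈ T} => X (↑j) ω) := by
    intro ω
    simp only [hφ2def]
    split <;> norm_num
  have hmul := hind.integral_fun_mul_eq_mul_integral
    ((hg.comp (hX_meas i)).aestronglyMeasurable) hm2.aestronglyMeasurable
  have hprod : μ B = ∏ j ∈ T, μ {ω | X j ω ≤ τ j} := by
    have hmeas := hX_indep.measure_inter_preimage_eq_mul (S := T)
      (sets := fun j => Set.Iic (τ j)) (fun j _ => measurableSet_Iic)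
    have h1 : B = ⋂ j ∈ T, X j ⁻¹' Set.Iic (τ j) := by
      ext ω; simp [hB]
    rw [h1, hmeas]; rfl
  have hintB : ∫ ω, φ2 (fun j : {x // x ∈ T} => X (↑j) ω) ∂μ = ∏ j ∈ T, (μ {ω | X j ω ≤ τ j}).toReal := by
    simp only [heq2]
    rw [integral_indicator_const (1:ℝ) hBset, smul_eq_mul, mul_one, measureReal_def, hprod, ENNReal.toReal_prod]
  calc ∫ ω, g (X i ω) * (B.indicator (fun _ => (1:ℝ)) ω) ∂μ
      = ∫ ω, g (X i ω) * φ2 (fun j : {x // x ∈ T} => X (↑j) ω) ∂μ := by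
        simp only [heq2]
    _ = (∫ ω, g (X i ω) ∂μ) * ∫ ω, φ2 (fun j : {x // x ∈ T} => X (↑j) ω) ∂μ := hmul
    _ = (∫ ω, g (X i ω) ∂μ) * ∏ j ∈ T, (μ {ω | X j ω ≤ τ j}).toReal := by rw [hintB]

set_option maxHeartbeats 2000000 in
/-- Theorem 1: for a monotone subadditive `f` that is weakly homogeneous of degree
`d ∈ (0,1]` and tolerance `η ≥ 1` over `[0,1]`, the discretization algorithm's sketch
`v(S) = E[f(Y_S)]` satisfies
`(1/2)(1−ε)^{k−1}(1−Δ/ε) v(S) ≤ u(S) ≤ 2η(1 + a^d k/(ε−Δ))/((1−ε)^k (1−Δ/ε)) v(S)`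
for all sets `S` with `|S| ≤ k`. -/
theorem sketch_weakly_homogeneous_approx
    {Ωs : Type*} [MeasurableSpace Ωs] (μ : Measure Ωs) [IsProbabilityMeasure μ]
    {n : ℕ} (hn : 1 ≤ n)
    (X : Fin n → Ωs → ℝ)
    (hX_meas : ∀ i, Measurable (X i))
    (hX_nonneg : ∀ i ω, 0 ≤ X i ω)
    (hX_indep : iIndepFun X μ)
    (f : (Fin n → ℝ) → ℝ)
    (hf_meas : Measurable f)
    (hf_nonneg : ∀ x : Fin n → ℝ, 0 ≤ x → 0 ≤ f x)
    (hf_mono : ∀ x y : Fin n → ℝ, 0 ≤ x → x ≤ y → f x ≤ f y)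
    (hf_subadd : ∀ x y : Fin n → ℝ, 0 ≤ x → 0 ≤ y → f (x + y) ≤ f x + f y)
    (d η : ℝ) (hd : d ∈ Set.Ioc (0 : ℝ) 1) (hη : 1 ≤ η)
    (hf_hom : ∀ (x : Fin n → ℝ) (θ : ℝ), 0 ≤ x → θ ∈ Set.Icc (0 : ℝ) 1 →
      (1 / η) * θ * f x ≤ f (θ • x) ∧ f (θ • x) ≤ θ ^ d * f x)
    (k : ℕ) (hk : 1 ≤ k)
    (ε Δ : ℝ) (hε : ε ∈ Set.Ioo (0 : ℝ) 1) (hΔ : Δ ∈ Set.Ico (0 : ℝ) ε)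
    (τ : Fin n → ℝ) (hτ : ∀ i, 0 ≤ τ i)
    (hquant : ∀ i, 1 - ε ≤ (μ {ω | X i ω ≤ τ i}).toReal ∧
      (μ {ω | X i ω ≤ τ i}).toReal ≤ 1 - ε + Δ)
    (H : Fin n → ℝ)
    (hH : ∀ i, H i = (∫ ω in {ω | τ i < X i ω}, f (Pi.single i (X i ω)) ∂μ) /
      (μ {ω | τ i < X i ω}).toReal)
    (hH_int : ∀ i, Integrable (fun ω => f (Pi.single i (X i ω))) μ)
    (cst : Fin n → ℝ) (hcst : ∀ i, τ i < cst i)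
    (hcstH : ∀ i, f (Pi.single i (cst i)) = H i)
    (Xhat : Fin n → Ωs → ℝ)
    (hXhat : ∀ i ω, Xhat i ω = if X i ω ≤ τ i then X i ω else cst i)
    (a : ℝ) (ha : a ∈ Set.Icc (0 : ℝ) 1)
    (Xtil : Fin n → Ωs → ℝ)
    (hXtil : ∀ i ω, Xtil i ω = if a * τ i < Xhat i ω then Xhat i ω else 0)
    (Y : Fin n → Ωs → ℝ)
    (hY : ∀ i ω, (1 - ε) * Xtil i ω ≤ Y i ω ∧ Y i ω ≤ Xtil i ω)
    (u v : Finset (Fin n) → ℝ)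
    (hu : ∀ S, u S = ∫ ω, f (mask S (fun i => X i ω)) ∂μ)
    (hv : ∀ S, v S = ∫ ω, f (mask S (fun i => Y i ω)) ∂μ)
    (hu_int : ∀ S : Finset (Fin n),
      Integrable (fun ω => f (mask S (fun i => X i ω))) μ)
    (hv_int : ∀ S : Finset (Fin n),
      Integrable (fun ω => f (mask S (fun i => Y i ω))) μ) :
    ∀ S : Finset (Fin n), S.card ≤ k →
      (1 / 2) * (1 - ε) ^ (k - 1) * (1 - Δ / ε) * v S ≤ u S ∧
      u S ≤ 2 * η * (1 + a ^ d * k / (ε - Δ)) / ((1 - ε) ^ k * (1 - Δ / ε)) * v S := by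
  intro S hSk
  classical
  obtain ⟨hε0, hε1⟩ := hε
  obtain ⟨hΔ0, hΔε⟩ := hΔ
  obtain ⟨hd0, hd1⟩ := hd
  obtain ⟨ha0, ha1⟩ := ha
  have hη0 : (0:ℝ) < η := lt_of_lt_of_le one_pos hη
  -- basic constants
  have h1ε0 : (0:ℝ) < 1 - ε := by linarith
  have h1ε1 : (1:ℝ) - ε ≤ 1 := by linarith
  have hεΔ : (0:ℝ) < ε - Δ := by linarith
  have hγ0 : (0:ℝ) < 1 - Δ / ε := by
    have : Δ / ε < 1 := (div_lt_one hε0).mpr hΔε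
    linarith
  have hγ1 : 1 - Δ / ε ≤ 1 := by
    have : 0 ≤ Δ / ε := div_nonneg hΔ0 (le_of_lt hε0)
    linarith
  have hβpos : (0:ℝ) < (1 - ε) ^ (k - 1) := pow_pos h1ε0 _
  have hβ1 : (1 - ε) ^ (k - 1) ≤ 1 := pow_le_one₀ (le_of_lt h1ε0) h1ε1
  have had0 : (0:ℝ) ≤ a ^ d := Real.rpow_nonneg ha0 d
  have hC0 : (0:ℝ) ≤ a ^ d * k / (ε - Δ) :=
    div_nonneg (mul_nonneg had0 (Nat.cast_nonneg k)) (le_of_lt hεΔ)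
  -- f 0 = 0
  have hf0 : f 0 = 0 := by
    have h1 := (hf_hom 0 0 le_rfl ⟨le_rfl, zero_le_one⟩).2
    rw [Real.zero_rpow (ne_of_gt hd0), smul_zero, zero_mul] at h1
    exact le_antisymm h1 (hf_nonneg 0 le_rfl)
  -- measurable sets
  have hlow_meas : ∀ i, MeasurableSet {ω | X i ω ≤ τ i} := fun i =>
    measurableSet_le (hX_meas i) measurable_const
  have hhigh_meas : ∀ i, MeasurableSet {ω | τ i < X i ω} := fun i =>
    measurableSet_lt measurable_const (hX_meas i)
  set q : Fin n → ℝ := fun i => (μ {ω | X i ω ≤ τ i}).toReal with hq_def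
  set p : Fin n → ℝ := fun i => (μ {ω | τ i < X i ω}).toReal with hp_def
  have hpq : ∀ i, p i = 1 - q i := by
    intro i
    have hc : {ω | τ i < X i ω} = {ω | X i ω ≤ τ i}ᶜ := by ext ω; simp [not_le]
    show (μ {ω | τ i < X i ω}).toReal = 1 - (μ {ω | X i ω ≤ τ i}).toReal
    rw [hc, prob_compl_eq_one_sub (hlow_meas i),
      ENNReal.toReal_sub_of_le prob_le_one ENNReal.one_ne_top, ENNReal.toReal_one]
  have hq1 : ∀ i, 1 - ε ≤ q i := fun i => (hquant i).1
  have hq2 : ∀ i, q i ≤ 1 - ε + Δ := fun i => (hquant i).2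
  have hp1 : ∀ i, ε - Δ ≤ p i := fun i => by rw [hpq i]; linarith [hq2 i]
  have hp0 : ∀ i, 0 ≤ p i := fun i => ENNReal.toReal_nonneg
  have hppos : ∀ i, 0 < p i := fun i => lt_of_lt_of_le hεΔ (hp1 i)
  have hcst0 : ∀ i, 0 ≤ cst i := fun i => le_of_lt (lt_of_le_of_lt (hτ i) (hcst i))
  have hsingle_nonneg : ∀ (i : Fin n) (t : ℝ), 0 ≤ t → (0 : Fin n → ℝ) ≤ Pi.single i t := by
    intro i t ht j
    rw [Pi.single_apply]
    split <;> [exact ht; exact le_rfl]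
  have hH0 : ∀ i, 0 ≤ H i := by
    intro i
    rw [← hcstH i]
    exact hf_nonneg _ (hsingle_nonneg i _ (hcst0 i))
  have hHint_set : ∀ i, ∫ ω in {ω | τ i < X i ω}, f (Pi.single i (X i ω)) ∂μ = H i * p i := by
    intro i
    rw [hH i, div_mul_cancel₀]
    exact (hppos i).ne'
  -- measurability of modified variables
  have hXhat_meas : ∀ i, Measurable (Xhat i) := by
    intro i
    have h : Xhat i = fun ω => if X i ω ≤ τ i then X i ω else cst i := funext (hXhat i)
    rw [h]
    exact Measurable.ite (hlow_meas i) (hX_meas i) measurable_const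
  have hXtil_meas : ∀ i, Measurable (Xtil i) := by
    intro i
    have h : Xtil i = fun ω => if a * τ i < Xhat i ω then Xhat i ω else 0 := funext (hXtil i)
    rw [h]
    exact Measurable.ite (measurableSet_lt measurable_const (hXhat_meas i)) (hXhat_meas i)
      measurable_const
  have hXL_meas : ∀ i, Measurable (fun ω => if X i ω ≤ τ i then X i ω else 0) := fun i =>
    Measurable.ite (hlow_meas i) (hX_meas i) measurable_const
  -- nonnegativity
  have hXhat0 : ∀ i ω, 0 ≤ Xhat i ω := by
    intro i ω; rw [hXhat i ω]; split <;> [exact hX_nonneg i ω; exact hcst0 i]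
  have hXtil0 : ∀ i ω, 0 ≤ Xtil i ω := by
    intro i ω; rw [hXtil i ω]; split <;> [exact hXhat0 i ω; exact le_rfl]
  have hY0 : ∀ i ω, 0 ≤ Y i ω := fun i ω =>
    le_trans (mul_nonneg (le_of_lt h1ε0) (hXtil0 i ω)) (hY i ω).1
  -- mask basics
  have hmask0 : ∀ z : Fin n → ℝ, (∀ j, 0 ≤ z j) → (0 : Fin n → ℝ) ≤ mask S z := by
    intro z hz j
    simp only [mask]
    split <;> [exact hz j; exact le_rfl]
  have hmaskmono : ∀ z z' : Fin n → ℝ, (∀ j, z j ≤ z' j) → mask S z ≤ mask S z' := by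
    intro z z' h j
    simp only [mask]
    split <;> [exact h j; exact le_rfl]
  have hmaskf_meas : ∀ Z : Fin n → Ωs → ℝ, (∀ i, Measurable (Z i)) →
      Measurable fun ω => f (mask S fun i => Z i ω) := by
    intro Z hZ
    refine hf_meas.comp (measurable_pi_lambda _ fun j => ?_)
    simp only [mask]
    split <;> [exact hZ j; exact measurable_const]
  have hsingle_le_mask : ∀ (i : Fin n), i ∈ S → ∀ z : Fin n → ℝ, (∀ j, 0 ≤ z j) →
      Pi.single i (z i) ≤ mask S z := by
    intro i hi z hz j
    rw [Pi.single_apply]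
    simp only [mask]
    by_cases hj : j = i
    · subst hj; rw [if_pos rfl, if_pos hi]
    · rw [if_neg hj]; split <;> [exact hz j; exact le_rfl]
  have hsingle_meas : ∀ i : Fin n, Measurable fun t : ℝ => (Pi.single i t : Fin n → ℝ) := by
    intro i
    refine measurable_pi_lambda _ fun j => ?_
    simp only [Pi.single_apply]
    split <;> [exact measurable_id; exact measurable_const]
  -- the integrands
  have int_FX := hu_int S
  have int_FY := hv_int S
  have hUdef := hu S
  have hVdef := hv S
  set FX : Ωs → ℝ := fun ω => f (mask S (fun i => X i ω)) with hFXdef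
  set FY : Ωs → ℝ := fun ω => f (mask S (fun i => Y i ω)) with hFYdef
  set FL : Ωs → ℝ := fun ω => f (mask S (fun i => if X i ω ≤ τ i then X i ω else 0)) with hFLdef
  set FH : Ωs → ℝ := fun ω => f (mask S (fun i => Xhat i ω)) with hFHdef
  set FT : Ωs → ℝ := fun ω => f (mask S (fun i => Xtil i ω)) with hFTdef
  have hFX0 : ∀ ω, 0 ≤ FX ω := fun ω => hf_nonneg _ (hmask0 _ fun j => hX_nonneg j ω)
  have hFY0 : ∀ ω, 0 ≤ FY ω := fun ω => hf_nonneg _ (hmask0 _ fun j => hY0 j ω)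
  have hFL0 : ∀ ω, 0 ≤ FL ω := fun ω => hf_nonneg _ (hmask0 _ fun j => by
    split <;> [exact hX_nonneg j ω; exact le_rfl])
  have hFH0 : ∀ ω, 0 ≤ FH ω := fun ω => hf_nonneg _ (hmask0 _ fun j => hXhat0 j ω)
  have hFT0 : ∀ ω, 0 ≤ FT ω := fun ω => hf_nonneg _ (hmask0 _ fun j => hXtil0 j ω)
  -- pointwise comparisons between the basic integrands
  have pw_YT : ∀ ω, FY ω ≤ FT ω := fun ω =>
    hf_mono _ _ (hmask0 _ fun j => hY0 j ω) (hmaskmono _ _ fun j => (hY j ω).2)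
  have pw_TH : ∀ ω, FT ω ≤ FH ω := fun ω =>
    hf_mono _ _ (hmask0 _ fun j => hXtil0 j ω) (hmaskmono _ _ fun j => by
      rw [hXtil j ω]; split <;> [exact le_rfl; exact hXhat0 j ω])
  have pw_LX : ∀ ω, FL ω ≤ FX ω := fun ω =>
    hf_mono _ _ (hmask0 _ fun j => by split <;> [exact hX_nonneg j ω; exact le_rfl])
      (hmaskmono _ _ fun j => by split <;> [exact le_rfl; exact hX_nonneg j ω])
  have pw_LH : ∀ ω, FL ω ≤ FH ω := fun ω =>
    hf_mono _ _ (hmask0 _ fun j => by split <;> [exact hX_nonneg j ω; exact le_rfl])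
      (hmaskmono _ _ fun j => by
        rw [hXhat j ω]
        split <;> [exact le_rfl; exact hcst0 j])
  -- summand families
  set Aset : Fin n → Set Ωs := fun i => {ω | τ i < X i ω ∧ ∀ j ∈ S.erase i, X j ω ≤ τ j}
    with hAdef
  have hA_meas : ∀ i, MeasurableSet (Aset i) := by
    intro i
    have h : Aset i = {ω | τ i < X i ω} ∩ ⋂ j ∈ S.erase i, {ω | X j ω ≤ τ j} := by
      ext ω; simp [hAdef, Set.mem_iInter]
    rw [h]
    exact (hhigh_meas i).inter (MeasurableSet.biInter (Set.to_countable _)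
      fun j _ => hlow_meas j)
  set g1 : Fin n → Ωs → ℝ :=
    fun i => {ω | τ i < X i ω}.indicator (fun ω => f (Pi.single i (X i ω))) with hg1def
  set g2 : Fin n → Ωs → ℝ :=
    fun i => {ω | τ i < X i ω}.indicator (fun _ => H i) with hg2def
  set g3 : Fin n → Ωs → ℝ :=
    fun i => (Aset i).indicator (fun ω => f (Pi.single i (X i ω))) with hg3def
  set g4 : Fin n → Ωs → ℝ := fun i => (Aset i).indicator (fun _ => H i) with hg4def
  have int_g1 : ∀ i, Integrable (g1 i) μ := fun i => (hH_int i).indicator (hhigh_meas i)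
  have int_g2 : ∀ i, Integrable (g2 i) μ := fun i =>
    (integrable_const (H i)).indicator (hhigh_meas i)
  have int_g3 : ∀ i, Integrable (g3 i) μ := fun i => (hH_int i).indicator (hA_meas i)
  have int_g4 : ∀ i, Integrable (g4 i) μ := fun i =>
    (integrable_const (H i)).indicator (hA_meas i)
  have hg1_nonneg : ∀ i ω, 0 ≤ g1 i ω := by
    intro i ω
    simp only [hg1def, Set.indicator_apply]
    split
    · exact hf_nonneg _ (hsingle_nonneg i _ (hX_nonneg i ω))
    · exact le_rfl
  have hg2_le : ∀ i ω, g2 i ω ≤ H i := by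
    intro i ω
    simp only [hg2def, Set.indicator_apply]
    split <;> [exact le_rfl; exact hH0 i]
  -- integrals of g1 and g2
  have hint_g1 : ∀ i, ∫ ω, g1 i ω ∂μ = H i * p i := by
    intro i
    rw [hg1def]
    rw [integral_indicator (hhigh_meas i)]
    exact hHint_set i
  have hint_g2 : ∀ i, ∫ ω, g2 i ω ∂μ = H i * p i := by
    intro i
    rw [hg2def]
    rw [integral_indicator_const (H i) (hhigh_meas i), smul_eq_mul, mul_comm]
    rfl
  -- pointwise decomposition: FX ≤ FL + ∑ g1
  have pw2 : ∀ ω, FX ω ≤ FL ω + ∑ i ∈ S, g1 i ω := by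
    intro ω
    have hdecomp : mask S (fun i => X i ω)
        = mask S (fun i => if X i ω ≤ τ i then X i ω else 0)
          + mask S (fun i => if τ i < X i ω then X i ω else 0) := by
      funext j
      simp only [mask, Pi.add_apply]
      by_cases hj : j ∈ S
      · rw [if_pos hj, if_pos hj, if_pos hj]
        by_cases hc : X j ω ≤ τ j
        · rw [if_pos hc, if_neg (not_lt.mpr hc), add_zero]
        · rw [if_neg hc, if_pos (not_le.mp hc), zero_add]
      · rw [if_neg hj, if_neg hj, if_neg hj, add_zero]
    have hsub : FX ω ≤ FL ω + f (mask S (fun i => if τ i < X i ω then X i ω else 0)) := by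
      rw [hFXdef]
      simp only
      rw [hdecomp]
      exact hf_subadd _ _
        (hmask0 _ fun j => by split <;> [exact hX_nonneg j ω; exact le_rfl])
        (hmask0 _ fun j => by split <;> [exact hX_nonneg j ω; exact le_rfl])
    have hsum : f (mask S (fun i => if τ i < X i ω then X i ω else 0))
        ≤ ∑ i ∈ S, g1 i ω := by
      refine le_trans (mask_le_sum_single f hf0 hf_subadd _
        (fun j => by split <;> [exact hX_nonneg j ω; exact le_rfl]) S) ?_
      refine le_of_eq (Finset.sum_congr rfl fun i _ => ?_)
      by_cases hc : τ i < X i ω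
      · rw [if_pos hc]
        simp [hg1def, Set.indicator_apply, hc]
      · rw [if_neg hc]
        simp [hg1def, Set.indicator_apply, hc, hf0]
    linarith
  -- pointwise decomposition: FH ≤ FL + ∑ g2
  have pw3 : ∀ ω, FH ω ≤ FL ω + ∑ i ∈ S, g2 i ω := by
    intro ω
    have hdecomp : mask S (fun i => Xhat i ω)
        = mask S (fun i => if X i ω ≤ τ i then X i ω else 0)
          + mask S (fun i => if τ i < X i ω then cst i else 0) := by
      funext j
      simp only [mask, Pi.add_apply]
      by_cases hj : j ∈ S
      · rw [if_pos hj, if_pos hj, if_pos hj, hXhat j ω]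
        by_cases hc : X j ω ≤ τ j
        · rw [if_pos hc, if_pos hc, if_neg (not_lt.mpr hc), add_zero]
        · rw [if_neg hc, if_neg hc, if_pos (not_le.mp hc), zero_add]
      · rw [if_neg hj, if_neg hj, if_neg hj, add_zero]
    have hsub : FH ω ≤ FL ω + f (mask S (fun i => if τ i < X i ω then cst i else 0)) := by
      rw [hFHdef]
      simp only
      rw [hdecomp]
      exact hf_subadd _ _
        (hmask0 _ fun j => by split <;> [exact hX_nonneg j ω; exact le_rfl])
        (hmask0 _ fun j => by split <;> [exact hcst0 j; exact le_rfl])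
    have hsum : f (mask S (fun i => if τ i < X i ω then cst i else 0))
        ≤ ∑ i ∈ S, g2 i ω := by
      refine le_trans (mask_le_sum_single f hf0 hf_subadd _
        (fun j => by split <;> [exact hcst0 j; exact le_rfl]) S) ?_
      refine le_of_eq (Finset.sum_congr rfl fun i _ => ?_)
      by_cases hc : τ i < X i ω
      · rw [if_pos hc]
        simp [hg2def, Set.indicator_apply, hc, hcstH i]
      · rw [if_neg hc]
        simp [hg2def, Set.indicator_apply, hc, hf0]
    linarith
  -- integrability of FL, FH, FT
  have int_FL : Integrable FL μ := by
    refine int_FX.mono' (hmaskf_meas _ hXL_meas).aestronglyMeasurable (ae_of_all _ fun ω => ?_)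
    rw [Real.norm_of_nonneg (hFL0 ω)]
    exact pw_LX ω
  have hsumH0 : (0:ℝ) ≤ ∑ i ∈ S, H i := Finset.sum_nonneg fun i _ => hH0 i
  have pw_H_bound : ∀ ω, FH ω ≤ FX ω + ∑ i ∈ S, H i := by
    intro ω
    refine le_trans (pw3 ω) (add_le_add (pw_LX ω) (Finset.sum_le_sum fun i _ => hg2_le i ω))
  have int_FH : Integrable FH μ := by
    refine (int_FX.add (integrable_const (∑ i ∈ S, H i))).mono'
      (hmaskf_meas _ hXhat_meas).aestronglyMeasurable (ae_of_all _ fun ω => ?_)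
    rw [Real.norm_of_nonneg (hFH0 ω)]
    exact pw_H_bound ω
  have int_FT : Integrable FT μ := by
    refine (int_FX.add (integrable_const (∑ i ∈ S, H i))).mono'
      (hmaskf_meas _ hXtil_meas).aestronglyMeasurable (ae_of_all _ fun ω => ?_)
    rw [Real.norm_of_nonneg (hFT0 ω)]
    exact le_trans (pw_TH ω) (pw_H_bound ω)
  -- bridging lemmas for set-abstractions
  have hq_app : ∀ j, (μ {ω | X j ω ≤ τ j}).toReal = q j := fun j => rfl
  -- integrals of g3 and g4 via independence
  have hint_g3 : ∀ i ∈ S, ∫ ω, g3 i ω ∂μ = (H i * p i) * ∏ j ∈ S.erase i, q j := by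
    intro i hi
    have key : ∫ ω, (if τ i < X i ω then f (Pi.single i (X i ω)) else 0)
          * ({ω' | ∀ j ∈ S.erase i, X j ω' ≤ τ j}.indicator (fun _ => (1:ℝ)) ω) ∂μ
        = (∫ ω, (if τ i < X i ω then f (Pi.single i (X i ω)) else 0) ∂μ)
          * ∏ j ∈ S.erase i, (μ {ω | X j ω ≤ τ j}).toReal := by
      refine indep_integral_mul μ X hX_meas hX_indep τ i (S.erase i) (Finset.notMem_erase i S)
        (fun t => if τ i < t then f (Pi.single i t) else 0) ?_ ?_
      · exact Measurable.ite measurableSet_Ioi (hf_meas.comp (hsingle_meas i)) measurable_const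
      · intro t
        by_cases hc : τ i < t
        · rw [if_pos hc]
          exact hf_nonneg _ (hsingle_nonneg i t (le_trans (hτ i) (le_of_lt hc)))
        · rw [if_neg hc]
    have hLHS : ∀ ω, g3 i ω = (if τ i < X i ω then f (Pi.single i (X i ω)) else 0)
        * ({ω' | ∀ j ∈ S.erase i, X j ω' ≤ τ j}.indicator (fun _ => (1:ℝ)) ω) := by
      intro ω
      simp only [hg3def, hAdef, Set.indicator_apply, Set.mem_setOf_eq]
      by_cases hc1 : τ i < X i ω <;> by_cases hc2 : ∀ j ∈ S.erase i, X j ω ≤ τ j <;>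
        simp [hc1, hc2]
    have hg1eq : (fun ω => if τ i < X i ω then f (Pi.single i (X i ω)) else 0) = g1 i := by
      funext ω
      simp only [hg1def, Set.indicator_apply, Set.mem_setOf_eq]
    calc ∫ ω, g3 i ω ∂μ
        = ∫ ω, (if τ i < X i ω then f (Pi.single i (X i ω)) else 0)
            * ({ω' | ∀ j ∈ S.erase i, X j ω' ≤ τ j}.indicator (fun _ => (1:ℝ)) ω) ∂μ := by
          simp only [hLHS]
      _ = (∫ ω, (if τ i < X i ω then f (Pi.single i (X i ω)) else 0) ∂μ)
            * ∏ j ∈ S.erase i, (μ {ω | X j ω ≤ τ j}).toReal := key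
      _ = (H i * p i) * ∏ j ∈ S.erase i, q j := by
          rw [hg1eq, hint_g1 i] <;> simp only [hq_app]
  have hint_g4 : ∀ i ∈ S, ∫ ω, g4 i ω ∂μ = (H i * p i) * ∏ j ∈ S.erase i, q j := by
    intro i hi
    have key : ∫ ω, (if τ i < X i ω then H i else 0)
          * ({ω' | ∀ j ∈ S.erase i, X j ω' ≤ τ j}.indicator (fun _ => (1:ℝ)) ω) ∂μ
        = (∫ ω, (if τ i < X i ω then H i else 0) ∂μ)
          * ∏ j ∈ S.erase i, (μ {ω | X j ω ≤ τ j}).toReal := by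
      refine indep_integral_mul μ X hX_meas hX_indep τ i (S.erase i) (Finset.notMem_erase i S)
        (fun t => if τ i < t then H i else 0) ?_ ?_
      · exact Measurable.ite measurableSet_Ioi measurable_const measurable_const
      · intro t
        by_cases hc : τ i < t
        · rw [if_pos hc]; exact hH0 i
        · rw [if_neg hc]
    have hLHS : ∀ ω, g4 i ω = (if τ i < X i ω then H i else 0)
        * ({ω' | ∀ j ∈ S.erase i, X j ω' ≤ τ j}.indicator (fun _ => (1:ℝ)) ω) := by
      intro ω
      simp only [hg4def, hAdef, Set.indicator_apply, Set.mem_setOf_eq]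
      by_cases hc1 : τ i < X i ω <;> by_cases hc2 : ∀ j ∈ S.erase i, X j ω ≤ τ j <;>
        simp [hc1, hc2]
    have hg2eq : (fun ω => if τ i < X i ω then H i else 0) = g2 i := by
      funext ω
      simp only [hg2def, Set.indicator_apply, Set.mem_setOf_eq]
    calc ∫ ω, g4 i ω ∂μ
        = ∫ ω, (if τ i < X i ω then H i else 0)
            * ({ω' | ∀ j ∈ S.erase i, X j ω' ≤ τ j}.indicator (fun _ => (1:ℝ)) ω) ∂μ := by
          simp only [hLHS]
      _ = (∫ ω, (if τ i < X i ω then H i else 0) ∂μ)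
            * ∏ j ∈ S.erase i, (μ {ω | X j ω ≤ τ j}).toReal := key
      _ = (H i * p i) * ∏ j ∈ S.erase i, q j := by
          rw [hg2eq, hint_g2 i] <;> simp only [hq_app]
  -- expectation-level facts
  have hU0 : 0 ≤ ∫ ω, FX ω ∂μ := integral_nonneg fun ω => hFX0 ω
  have hV0 : 0 ≤ ∫ ω, FY ω ∂μ := integral_nonneg fun ω => hFY0 ω
  have hUT0 : 0 ≤ ∫ ω, FT ω ∂μ := integral_nonneg fun ω => hFT0 ω
  have e1 : ∫ ω, FY ω ∂μ ≤ ∫ ω, FT ω ∂μ := integral_mono int_FY int_FT pw_YT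
  have e2 : ∫ ω, FT ω ∂μ ≤ ∫ ω, FH ω ∂μ := integral_mono int_FT int_FH pw_TH
  have e3 : ∫ ω, FL ω ∂μ ≤ ∫ ω, FX ω ∂μ := integral_mono int_FL int_FX pw_LX
  have e3' : ∫ ω, FL ω ∂μ ≤ ∫ ω, FH ω ∂μ := integral_mono int_FL int_FH pw_LH
  have int_sum1 : Integrable (fun ω => ∑ i ∈ S, g1 i ω) μ :=
    integrable_finset_sum _ fun i _ => int_g1 i
  have int_sum2 : Integrable (fun ω => ∑ i ∈ S, g2 i ω) μ :=
    integrable_finset_sum _ fun i _ => int_g2 i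
  have e4 : ∫ ω, FX ω ∂μ ≤ ∫ ω, FL ω ∂μ + ∑ i ∈ S, H i * p i := by
    calc ∫ ω, FX ω ∂μ ≤ ∫ ω, (FL ω + ∑ i ∈ S, g1 i ω) ∂μ :=
          integral_mono int_FX (int_FL.add int_sum1) pw2
      _ = ∫ ω, FL ω ∂μ + ∑ i ∈ S, H i * p i := by
          rw [integral_add int_FL int_sum1, integral_finset_sum _ fun i _ => int_g1 i]
          exact congrArg _ (Finset.sum_congr rfl fun i _ => hint_g1 i)
  have e5 : ∫ ω, FH ω ∂μ ≤ ∫ ω, FL ω ∂μ + ∑ i ∈ S, H i * p i := by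
    calc ∫ ω, FH ω ∂μ ≤ ∫ ω, (FL ω + ∑ i ∈ S, g2 i ω) ∂μ :=
          integral_mono int_FH (int_FL.add int_sum2) pw3
      _ = ∫ ω, FL ω ∂μ + ∑ i ∈ S, H i * p i := by
          rw [integral_add int_FL int_sum2, integral_finset_sum _ fun i _ => int_g2 i]
          exact congrArg _ (Finset.sum_congr rfl fun i _ => hint_g2 i)
  -- product lower bound
  have hQ : ∀ i ∈ S, (1 - ε) ^ (k - 1) ≤ ∏ j ∈ S.erase i, q j := by
    intro i hi
    have hcard : (S.erase i).card ≤ k - 1 := by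
      rw [Finset.card_erase_of_mem hi]
      omega
    calc (1 - ε) ^ (k - 1) ≤ (1 - ε) ^ ((S.erase i).card) :=
          pow_le_pow_of_le_one (le_of_lt h1ε0) h1ε1 hcard
      _ = ∏ _j ∈ S.erase i, (1 - ε) := (Finset.prod_const _).symm
      _ ≤ ∏ j ∈ S.erase i, q j :=
          Finset.prod_le_prod (fun j _ => le_of_lt h1ε0) (fun j _ => hq1 j)
  -- pointwise exclusivity bounds
  have hexcl : ∀ ω, ∀ i ∈ S, ∀ j ∈ S,
      (τ i < X i ω ∧ ∀ j' ∈ S.erase i, X j' ω ≤ τ j') →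
      (τ j < X j ω ∧ ∀ j' ∈ S.erase j, X j' ω ≤ τ j') → i = j := by
    intro ω i hiS j hjS hPi hPj
    by_contra hne
    exact absurd (hPi.2 j (Finset.mem_erase.mpr ⟨fun h => hne h.symm, hjS⟩))
      (not_le.mpr hPj.1)
  have pw6 : ∀ ω, ∑ i ∈ S, g3 i ω ≤ FX ω := by
    intro ω
    have hform : ∀ i, g3 i ω
        = if (τ i < X i ω ∧ ∀ j ∈ S.erase i, X j ω ≤ τ j) then f (Pi.single i (X i ω)) else 0 := by
      intro i
      simp [hg3def, hAdef, Set.indicator_apply]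
    rw [Finset.sum_congr rfl fun i _ => hform i]
    refine sum_exclusive_le S _ _ _ (hFX0 ω) ?_ (hexcl ω)
    intro i hiS _
    exact hf_mono _ _ (hsingle_nonneg i _ (hX_nonneg i ω))
      (hsingle_le_mask i hiS _ fun j => hX_nonneg j ω)
  have hH_le_FT : ∀ i ∈ S, ∀ ω, τ i < X i ω → H i ≤ FT ω := by
    intro i hiS ω hc
    have hXhat_eq : Xhat i ω = cst i := by rw [hXhat i ω, if_neg (not_le.mpr hc)]
    have hXtil_eq : Xtil i ω = cst i := by
      rw [hXtil i ω, hXhat_eq, if_pos]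
      exact lt_of_le_of_lt (mul_le_of_le_one_left (hτ i) ha1) (hcst i)
    have hle := hsingle_le_mask i hiS (fun j => Xtil j ω) (fun j => hXtil0 j ω)
    rw [show Xtil i ω = cst i from hXtil_eq] at hle
    rw [← hcstH i]
    exact hf_mono _ _ (hsingle_nonneg i _ (hcst0 i)) hle
  have pw5 : ∀ ω, ∑ i ∈ S, g4 i ω ≤ FT ω := by
    intro ω
    have hform : ∀ i, g4 i ω
        = if (τ i < X i ω ∧ ∀ j ∈ S.erase i, X j ω ≤ τ j) then H i else 0 := by
      intro i
      simp [hg4def, hAdef, Set.indicator_apply]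
    rw [Finset.sum_congr rfl fun i _ => hform i]
    refine sum_exclusive_le S _ _ _ (hFT0 ω) ?_ (hexcl ω)
    intro i hiS hPi
    exact hH_le_FT i hiS ω hPi.1
  -- independence-based bounds
  have e6 : (1 - ε) ^ (k - 1) * (∑ i ∈ S, H i * p i) ≤ ∫ ω, FX ω ∂μ := by
    calc (1 - ε) ^ (k - 1) * (∑ i ∈ S, H i * p i)
        = ∑ i ∈ S, (1 - ε) ^ (k - 1) * (H i * p i) := Finset.mul_sum _ _ _
      _ ≤ ∑ i ∈ S, (H i * p i) * ∏ j ∈ S.erase i, q j := by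
          refine Finset.sum_le_sum fun i hi => ?_
          rw [mul_comm]
          exact mul_le_mul_of_nonneg_left (hQ i hi) (mul_nonneg (hH0 i) (hp0 i))
      _ = ∑ i ∈ S, ∫ ω, g3 i ω ∂μ :=
          Finset.sum_congr rfl fun i hi => (hint_g3 i hi).symm
      _ = ∫ ω, ∑ i ∈ S, g3 i ω ∂μ := (integral_finset_sum _ fun i _ => int_g3 i).symm
      _ ≤ ∫ ω, FX ω ∂μ :=
          integral_mono (integrable_finset_sum _ fun i _ => int_g3 i) int_FX pw6
  have e7 : (1 - ε) ^ (k - 1) * (∑ i ∈ S, H i * p i) ≤ ∫ ω, FT ω ∂μ := by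
    calc (1 - ε) ^ (k - 1) * (∑ i ∈ S, H i * p i)
        = ∑ i ∈ S, (1 - ε) ^ (k - 1) * (H i * p i) := Finset.mul_sum _ _ _
      _ ≤ ∑ i ∈ S, (H i * p i) * ∏ j ∈ S.erase i, q j := by
          refine Finset.sum_le_sum fun i hi => ?_
          rw [mul_comm]
          exact mul_le_mul_of_nonneg_left (hQ i hi) (mul_nonneg (hH0 i) (hp0 i))
      _ = ∑ i ∈ S, ∫ ω, g4 i ω ∂μ :=
          Finset.sum_congr rfl fun i hi => (hint_g4 i hi).symm
      _ = ∫ ω, ∑ i ∈ S, g4 i ω ∂μ := (integral_finset_sum _ fun i _ => int_g4 i).symm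
      _ ≤ ∫ ω, FT ω ∂μ :=
          integral_mono (integrable_finset_sum _ fun i _ => int_g4 i) int_FT pw5
  -- per-coordinate bound H i * p i ≤ ∫ FT
  have hHp_le_UT : ∀ i ∈ S, H i * p i ≤ ∫ ω, FT ω ∂μ := by
    intro i hi
    have pwg2 : ∀ ω, g2 i ω ≤ FT ω := by
      intro ω
      simp only [hg2def, Set.indicator_apply, Set.mem_setOf_eq]
      by_cases hc : τ i < X i ω
      · rw [if_pos hc]
        exact hH_le_FT i hi ω hc
      · rw [if_neg hc]
        exact hFT0 ω
    calc H i * p i = ∫ ω, g2 i ω ∂μ := (hint_g2 i).symm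
      _ ≤ ∫ ω, FT ω ∂μ := integral_mono (int_g2 i) int_FT pwg2
  -- small-value decomposition : FH ≤ FT + ∑ a^d H i
  have pw4 : ∀ ω, FH ω ≤ FT ω + ∑ i ∈ S, a ^ d * H i := by
    intro ω
    have hdecomp : mask S (fun i => Xhat i ω)
        = mask S (fun i => Xtil i ω)
          + mask S (fun i => if a * τ i < Xhat i ω then 0 else Xhat i ω) := by
      funext j
      simp only [mask, Pi.add_apply]
      by_cases hj : j ∈ S
      · rw [if_pos hj, if_pos hj, if_pos hj, hXtil j ω]
        by_cases hc : a * τ j < Xhat j ω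
        · rw [if_pos hc, if_pos hc, add_zero]
        · rw [if_neg hc, if_neg hc, zero_add]
      · rw [if_neg hj, if_neg hj, if_neg hj, add_zero]
    have hsub : FH ω ≤ FT ω + f (mask S (fun i => if a * τ i < Xhat i ω then 0 else Xhat i ω)) := by
      rw [hFHdef]
      simp only
      rw [hdecomp]
      exact hf_subadd _ _ (hmask0 _ fun j => hXtil0 j ω)
        (hmask0 _ fun j => by split <;> [exact le_rfl; exact hXhat0 j ω])
    have hsum : f (mask S (fun i => if a * τ i < Xhat i ω then 0 else Xhat i ω))
        ≤ ∑ i ∈ S, a ^ d * H i := by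
      refine le_trans (mask_le_sum_single f hf0 hf_subadd _
        (fun j => by split <;> [exact le_rfl; exact hXhat0 j ω]) S) ?_
      refine Finset.sum_le_sum fun i _ => ?_
      by_cases hc : a * τ i < Xhat i ω
      · rw [if_pos hc]
        rw [show (Pi.single i (0:ℝ) : Fin n → ℝ) = 0 from Pi.single_zero i, hf0]
        exact mul_nonneg had0 (hH0 i)
      · rw [if_neg hc]
        have h1 : Xhat i ω ≤ a * τ i := not_lt.mp hc
        have hsmul : a • (Pi.single i (τ i) : Fin n → ℝ) = Pi.single i (a * τ i) := by
          funext j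
          rw [Pi.smul_apply, Pi.single_apply, Pi.single_apply, smul_eq_mul]
          split <;> [rfl; exact mul_zero a]
        calc f (Pi.single i (Xhat i ω)) ≤ f (Pi.single i (a * τ i)) := by
              refine hf_mono _ _ (hsingle_nonneg _ _ (hXhat0 i ω)) fun j => ?_
              rw [Pi.single_apply, Pi.single_apply]
              split <;> [exact h1; exact le_rfl]
          _ = f (a • (Pi.single i (τ i) : Fin n → ℝ)) := by rw [hsmul]
          _ ≤ a ^ d * f (Pi.single i (τ i)) :=
              (hf_hom _ a (hsingle_nonneg _ _ (hτ i)) ⟨ha0, ha1⟩).2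
          _ ≤ a ^ d * H i := by
              rw [← hcstH i]
              refine mul_le_mul_of_nonneg_left
                (hf_mono _ _ (hsingle_nonneg _ _ (hτ i)) fun j => ?_) had0
              rw [Pi.single_apply, Pi.single_apply]
              split <;> [exact le_of_lt (hcst i); exact le_rfl]
    linarith
  have e8 : ∫ ω, FH ω ∂μ ≤ ∫ ω, FT ω ∂μ + ∑ i ∈ S, a ^ d * H i := by
    calc ∫ ω, FH ω ∂μ ≤ ∫ ω, (FT ω + ∑ i ∈ S, a ^ d * H i) ∂μ :=
          integral_mono int_FH (int_FT.add (integrable_const _)) pw4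
      _ = ∫ ω, FT ω ∂μ + ∑ i ∈ S, a ^ d * H i := by
          rw [integral_add int_FT (integrable_const _), integral_const, probReal_univ,
            one_smul]
  -- scaling bound : FT vs FY
  have pw7 : ∀ ω, 1 / η * (1 - ε) * FT ω ≤ FY ω := by
    intro ω
    have h := (hf_hom (mask S fun i => Xtil i ω) (1 - ε)
      (hmask0 _ fun j => hXtil0 j ω) ⟨le_of_lt h1ε0, h1ε1⟩).1
    refine le_trans h (hf_mono _ _ ?_ ?_)
    · intro j
      rw [Pi.smul_apply, smul_eq_mul]
      exact mul_nonneg (le_of_lt h1ε0) (hmask0 _ (fun j' => hXtil0 j' ω) j)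
    · intro j
      rw [Pi.smul_apply, smul_eq_mul]
      simp only [mask]
      by_cases hj : j ∈ S
      · rw [if_pos hj, if_pos hj]
        exact (hY j ω).1
      · rw [if_neg hj, if_neg hj, mul_zero]
  have e9 : 1 / η * (1 - ε) * ∫ ω, FT ω ∂μ ≤ ∫ ω, FY ω ∂μ := by
    calc 1 / η * (1 - ε) * ∫ ω, FT ω ∂μ = ∫ ω, 1 / η * (1 - ε) * FT ω ∂μ :=
          (integral_const_mul _ _).symm
      _ ≤ ∫ ω, FY ω ∂μ := integral_mono (int_FT.const_mul _) int_FY pw7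
  -- final assembly
  rw [hUdef, hVdef]
  set U := ∫ ω, FX ω ∂μ
  set V := ∫ ω, FY ω ∂μ
  set W := ∫ ω, FL ω ∂μ
  set UH := ∫ ω, FH ω ∂μ
  set UT := ∫ ω, FT ω ∂μ
  set Φ := ∑ i ∈ S, H i * p i with hΦdef
  set β := (1 - ε) ^ (k - 1) with hβdef
  have hΦ0 : 0 ≤ Φ := Finset.sum_nonneg fun i _ => mul_nonneg (hH0 i) (hp0 i)
  constructor
  · -- lower bound
    have hV_leq : V ≤ U + Φ := le_trans e1 (le_trans e2 (le_trans e5 (by linarith)))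
    have h3' : β * V ≤ β * U + β * Φ := by nlinarith [hβpos]
    have h4 : β * U ≤ U := by nlinarith [hβ1, hU0]
    have h5 : 1 / 2 * β * V ≤ U := by linarith
    have h2 : 1 / 2 * β * (1 - Δ / ε) * V ≤ 1 / 2 * β * V := by
      have hcoef : 1 / 2 * β * (1 - Δ / ε) ≤ 1 / 2 * β := by nlinarith [hβpos]
      exact mul_le_mul_of_nonneg_right hcoef hV0
    linarith
  · -- upper bound
    have hHUT : ∀ i ∈ S, H i ≤ UT / (ε - Δ) := by
      intro i hi
      rw [le_div_iff₀ hεΔ]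
      calc H i * (ε - Δ) ≤ H i * p i := mul_le_mul_of_nonneg_left (hp1 i) (hH0 i)
        _ ≤ UT := hHp_le_UT i hi
    have hsum_bound : ∑ i ∈ S, a ^ d * H i ≤ a ^ d * (k : ℝ) / (ε - Δ) * UT := by
      calc ∑ i ∈ S, a ^ d * H i ≤ ∑ _i ∈ S, a ^ d * (UT / (ε - Δ)) :=
            Finset.sum_le_sum fun i hi => mul_le_mul_of_nonneg_left (hHUT i hi) had0
        _ = (S.card : ℝ) * (a ^ d * (UT / (ε - Δ))) := by
            rw [Finset.sum_const, nsmul_eq_mul]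
        _ ≤ (k : ℝ) * (a ^ d * (UT / (ε - Δ))) := by
            refine mul_le_mul_of_nonneg_right (Nat.cast_le.mpr hSk) ?_
            exact mul_nonneg had0 (div_nonneg hUT0 (le_of_lt hεΔ))
        _ = a ^ d * (k : ℝ) / (ε - Δ) * UT := by
            field_simp
    have e8' : UH ≤ UT + a ^ d * (k : ℝ) / (ε - Δ) * UT := le_trans e8 (by linarith)
    have hUH0 : 0 ≤ UH := le_trans hUT0 e2
    have hCUT : 0 ≤ a ^ d * (k : ℝ) / (ε - Δ) * UT := mul_nonneg hC0 hUT0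
    have t1 : β * U ≤ β * UH + β * Φ := by nlinarith [e4, e3', hβpos]
    have t2 : β * UH ≤ β * (UT + a ^ d * (k : ℝ) / (ε - Δ) * UT) :=
      mul_le_mul_of_nonneg_left e8' (le_of_lt hβpos)
    have t3 : β * (UT + a ^ d * (k : ℝ) / (ε - Δ) * UT)
        ≤ UT + a ^ d * (k : ℝ) / (ε - Δ) * UT := by nlinarith [hβ1, hUT0, hCUT, hβpos]
    have hU_bound : β * U ≤ 2 * (1 + a ^ d * (k : ℝ) / (ε - Δ)) * UT := by
      have t4 : β * Φ ≤ UT := e7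
      nlinarith [hCUT]
    have e9' : (1 - ε) * UT ≤ η * V := by
      have h := mul_le_mul_of_nonneg_left e9 (le_of_lt hη0)
      have hid : η * (1 / η * (1 - ε) * UT) = (1 - ε) * UT := by
        field_simp
      linarith [hid ▸ h]
    have hD : 0 < (1 - ε) ^ k * (1 - Δ / ε) := mul_pos (pow_pos h1ε0 k) hγ0
    rw [div_mul_eq_mul_div, le_div_iff₀ hD]
    have hβε : β * (1 - ε) = (1 - ε) ^ k := by
      rw [hβdef, ← pow_succ]
      congr 1
      omega
    have hη2 : 0 ≤ η * V := mul_nonneg (le_of_lt hη0) hV0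
    calc U * ((1 - ε) ^ k * (1 - Δ / ε))
        = ((1 - Δ / ε) * (1 - ε)) * (β * U) := by rw [← hβε]; ring
      _ ≤ ((1 - Δ / ε) * (1 - ε)) * (2 * (1 + a ^ d * (k : ℝ) / (ε - Δ)) * UT) :=
          mul_le_mul_of_nonneg_left hU_bound (mul_nonneg (le_of_lt hγ0) (le_of_lt h1ε0))
      _ = ((1 - Δ / ε) * (2 * (1 + a ^ d * (k : ℝ) / (ε - Δ)))) * ((1 - ε) * UT) := by ring
      _ ≤ ((1 - Δ / ε) * (2 * (1 + a ^ d * (k : ℝ) / (ε - Δ)))) * (η * V) := by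
          refine mul_le_mul_of_nonneg_left e9' ?_
          exact mul_nonneg (le_of_lt hγ0) (by linarith [hC0])
      _ ≤ (1 * (2 * (1 + a ^ d * (k : ℝ) / (ε - Δ)))) * (η * V) := by
          refine mul_le_mul_of_nonneg_right ?_ hη2
          exact mul_le_mul_of_nonneg_right hγ1 (by linarith [hC0])
      _ = 2 * η * (1 + a ^ d * (k : ℝ) / (ε - Δ)) * V := by ring
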